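/- Let n ≥ 1 be odd and let s ∈ {-1,1}^n (a vector in ℝ^n with all entries ±1). Then the sum of all vectors d ∈ {-1,1}^n satisfying dᵀs ≥ 0 equals C(n-1, (n-1)/2) · s, where C(·,·) denotes the binomial coefficient. -/
import Mathlib


/-- The ±1 vector in `ℝ^n` associated with a Boolean sign pattern. -/
def pmVec (n : ℕ) (ε : Fin n → Bool) : Fin n → ℝ := fun i => if ε i then 1 else -1

open Finset

lemma countOut {n : ℕ} (i : Fin n) (k : ℕ) :
    (Finset.powersetCard k (Finset.univ : Finset (Fin n))).filter (fun S => i ∉ S)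
      = Finset.powersetCard k (Finset.univ.erase i) := by
  ext S
  simp only [mem_filter, mem_powersetCard, subset_erase, subset_univ, true_and]
  tauto

lemma card_erase_univ {n : ℕ} (i : Fin n) : (Finset.univ.erase i).card = n - 1 := by
  rw [Finset.card_erase_of_mem (Finset.mem_univ i), Finset.card_univ, Fintype.card_fin]

lemma countOut_card {n : ℕ} (i : Fin n) (k : ℕ) :
    (((Finset.powersetCard k (Finset.univ : Finset (Fin n))).filter (fun S => i ∉ S)).card)
      = (n-1).choose k := by
  rw [countOut, Finset.card_powersetCard, card_erase_univ]

lemma countIn_card {n : ℕ} (i : Fin n) (k : ℕ) :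
    (((Finset.powersetCard (k+1) (Finset.univ : Finset (Fin n))).filter (fun S => i ∈ S)).card)
      = (n-1).choose k := by
  rw [← card_erase_univ i, ← Finset.card_powersetCard k (Finset.univ.erase i)]
  refine Finset.card_bij' (fun S _ => S.erase i) (fun T _ => insert i T) ?_ ?_ ?_ ?_
  · intro S hS
    simp only [mem_filter, mem_powersetCard] at hS
    simp only [mem_powersetCard, subset_erase]
    exact ⟨⟨Finset.subset_univ _, Finset.notMem_erase _ _⟩,
      by rw [Finset.card_erase_of_mem hS.2, hS.1.2]; omega⟩
  · intro T hT
    simp only [mem_powersetCard, subset_erase] at hT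
    simp only [mem_filter, mem_powersetCard]
    refine ⟨⟨Finset.subset_univ _, ?_⟩, Finset.mem_insert_self _ _⟩
    rw [Finset.card_insert_of_notMem hT.1.2, hT.2]
  · intro S hS
    simp only [mem_filter] at hS
    exact Finset.insert_erase hS.2
  · intro T hT
    simp only [mem_powersetCard, subset_erase] at hT
    exact Finset.erase_insert hT.1.2

lemma pm_sum_card {n : ℕ} (ε : Fin n → Bool) :
    (∑ j, pmVec n ε j) = 2 * ((Finset.univ.filter (fun j => ε j = true)).card : ℝ) - n := by
  have : ∀ j, pmVec n ε j = 2 * (if ε j = true then (1:ℝ) else 0) - 1 := by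
    intro j; by_cases h : ε j <;> norm_num [pmVec, h]
  simp_rw [this]
  rw [Finset.sum_sub_distrib, ← Finset.mul_sum, Finset.sum_boole, Finset.sum_const,
    Finset.card_univ, Fintype.card_fin, nsmul_eq_mul, mul_one]

lemma myInnerSum {n : ℕ} (i : Fin n) (k : ℕ) :
    (∑ S ∈ Finset.powersetCard (k+1) (Finset.univ : Finset (Fin n)),
        (if i ∈ S then (1:ℝ) else -1))
      = ((n-1).choose k : ℝ) - ((n-1).choose (k+1) : ℝ) := by
  rw [Finset.sum_ite, Finset.sum_const, Finset.sum_const, countIn_card,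
    countOut_card i (k+1)]
  simp [nsmul_eq_mul]
  ring

lemma core {n : ℕ} (m : ℕ) (hn : n = 2*m+1) (i : Fin n) :
    (∑ η ∈ Finset.univ.filter (fun η : Fin n → Bool => 0 ≤ ∑ j, pmVec n η j),
      pmVec n η i) = ((2*m).choose m : ℝ) := by
  -- reindex over finsets
  have step1 : (∑ η ∈ Finset.univ.filter (fun η : Fin n → Bool => 0 ≤ ∑ j, pmVec n η j),
      pmVec n η i)
      = ∑ S ∈ (Finset.univ : Finset (Finset (Fin n))).filter (fun S => n ≤ 2 * S.card),
          (if i ∈ S then (1:ℝ) else -1) := by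
    refine Finset.sum_nbij' (fun η => Finset.univ.filter (fun j => η j = true))
      (fun S => fun j => decide (j ∈ S)) ?_ ?_ ?_ ?_ ?_
    · intro η hη
      simp only [Finset.mem_filter, Finset.mem_univ, true_and] at hη ⊢
      rw [pm_sum_card] at hη
      have : (n:ℝ) ≤ 2 * ((Finset.univ.filter (fun j => η j = true)).card : ℝ) := by linarith
      exact_mod_cast this
    · intro S hS
      simp only [Finset.mem_filter, Finset.mem_univ, true_and] at hS ⊢
      rw [pm_sum_card]
      have hc : Finset.univ.filter (fun j => decide (j ∈ S) = true) = S := by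
        ext j; simp
      rw [hc]
      have : (n:ℝ) ≤ 2 * (S.card : ℝ) := by exact_mod_cast hS
      linarith
    · intro η _; funext j; simp
    · intro S _; ext j; simp
    · intro η _
      simp only [pmVec, Finset.mem_filter, Finset.mem_univ, true_and]
  rw [step1]
  -- fiberwise over cardinality
  have step2 : (∑ S ∈ (Finset.univ : Finset (Finset (Fin n))).filter (fun S => n ≤ 2 * S.card),
          (if i ∈ S then (1:ℝ) else -1))
      = ∑ k ∈ Finset.range (n+1),
          ∑ S ∈ ((Finset.univ : Finset (Finset (Fin n))).filter
              (fun S => n ≤ 2 * S.card)).filter (fun S => S.card = k),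
            (if i ∈ S then (1:ℝ) else -1) := by
    refine (Finset.sum_fiberwise_of_maps_to ?_ _).symm
    intro S _
    simp only [Finset.mem_range, Nat.lt_succ_iff]
    calc S.card ≤ Fintype.card (Fin n) := Finset.card_le_univ S
      _ = n := Fintype.card_fin n
  rw [step2]
  -- evaluate the fibers
  have hfib : ∀ k : ℕ, ((Finset.univ : Finset (Finset (Fin n))).filter
              (fun S => n ≤ 2 * S.card)).filter (fun S => S.card = k)
      = if n ≤ 2 * k then Finset.powersetCard k Finset.univ else ∅ := by
    intro k
    split_ifs with h
    · ext S
      simp only [Finset.mem_filter, Finset.mem_univ, true_and,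
        Finset.mem_powersetCard, Finset.subset_univ]
      constructor
      · rintro ⟨_, h2⟩; exact h2
      · rintro h2; exact ⟨by omega, h2⟩
    · rw [Finset.filter_eq_empty_iff]
      rintro S hS
      simp only [Finset.mem_filter, Finset.mem_univ, true_and] at hS
      omega
  simp_rw [hfib, apply_ite (fun t => ∑ S ∈ t, (if i ∈ S then (1:ℝ) else -1)),
    Finset.sum_empty, ← Finset.sum_filter]
  have hrange : (Finset.range (n+1)).filter (fun k => n ≤ 2 * k)
      = Finset.Ico (m+1) (2*m+2) := by
    ext k
    simp only [Finset.mem_filter, Finset.mem_range, Finset.mem_Ico]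
    omega
  rw [hrange]
  have hinner : ∀ k ∈ Finset.Ico (m+1) (2*m+2),
      (∑ S ∈ Finset.powersetCard k (Finset.univ : Finset (Fin n)),
        (if i ∈ S then (1:ℝ) else -1))
      = ((2*m).choose (k-1) : ℝ) - ((2*m).choose k : ℝ) := by
    intro k hk
    simp only [Finset.mem_Ico] at hk
    have hk1 : k - 1 + 1 = k := by omega
    have hnm : n - 1 = 2 * m := by omega
    rw [← hk1, myInnerSum, hnm, hk1]
  rw [Finset.sum_congr rfl hinner, Finset.sum_Ico_eq_sum_range]
  have h2 : 2*m+2 - (m+1) = m + 1 := by omega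
  rw [h2]
  have hcongr : ∀ j ∈ Finset.range (m+1),
      (((2*m).choose (m+1+j-1) : ℝ) - ((2*m).choose (m+1+j) : ℝ))
      = (fun j => ((2*m).choose (m+j) : ℝ)) j - (fun j => ((2*m).choose (m+j) : ℝ)) (j+1) := by
    intro j _
    have e1 : m+1+j-1 = m+j := by omega
    have e2 : m+1+j = m+(j+1) := by omega
    rw [e1, e2]
  rw [Finset.sum_congr rfl hcongr, Finset.sum_range_sub' (fun j => ((2*m).choose (m+j) : ℝ))]
  have : (2*m).choose (m+(m+1)) = 0 := Nat.choose_eq_zero_of_lt (by omega)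
  simp [this]

/-- For odd `n ≥ 1` and a sign vector `s ∈ {-1,1}^n`, the sum of all
`d ∈ {-1,1}^n` with `dᵀs ≥ 0` equals `C(n-1, (n-1)/2) • s`. -/
theorem sum_signvectors_nonneg_side_odd
    (n : ℕ) (hn : 1 ≤ n) (hno : Odd n)
    (s : Fin n → ℝ) (hs : ∀ i, s i = 1 ∨ s i = -1) :
    (∑ ε ∈ Finset.univ.filter
        (fun ε : Fin n → Bool => 0 ≤ ∑ i, pmVec n ε i * s i),
      pmVec n ε) = ((n - 1).choose ((n - 1) / 2) : ℝ) • s := by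
  classical
  obtain ⟨m, hm⟩ := hno
  have hm' : n = 2*m+1 := by omega
  set mask : Fin n → Bool := fun j => if s j = 1 then true else false with hmask
  set e : (Fin n → Bool) → (Fin n → Bool) := fun η j => η j == mask j with he
  have key : ∀ η j, pmVec n (e η) j = pmVec n η j * s j := by
    intro η j
    rcases hs j with h | h
    · have hmj : mask j = true := by simp [hmask, h]
      cases hη : η j <;> simp [pmVec, he, hη, hmj, h]
    · have hmj : mask j = false := by
        have : s j ≠ 1 := by rw [h]; norm_num
        simp [hmask, this]
      cases hη : η j <;> simp [pmVec, he, hη, hmj, h]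
  have hinv : ∀ η, e (e η) = η := by
    intro η; funext j
    simp only [he]
    cases η j <;> cases mask j <;> rfl
  have hsq : ∀ j, s j * s j = 1 := by
    intro j; rcases hs j with h | h <;> rw [h] <;> norm_num
  have step : (∑ ε ∈ Finset.univ.filter
        (fun ε : Fin n → Bool => 0 ≤ ∑ i, pmVec n ε i * s i),
      pmVec n ε)
      = ∑ η ∈ Finset.univ.filter (fun η : Fin n → Bool => 0 ≤ ∑ j, pmVec n η j),
          (fun i => pmVec n η i * s i) := by
    refine Finset.sum_nbij' e e ?_ ?_ ?_ ?_ ?_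
    · intro ε hε
      simp only [Finset.mem_filter, Finset.mem_univ, true_and] at hε ⊢
      calc (0:ℝ) ≤ ∑ i, pmVec n ε i * s i := hε
        _ = ∑ j, pmVec n (e ε) j := by
            refine Finset.sum_congr rfl fun j _ => ?_
            rw [key]
    · intro η hη
      simp only [Finset.mem_filter, Finset.mem_univ, true_and] at hη ⊢
      calc (0:ℝ) ≤ ∑ j, pmVec n η j := hη
        _ = ∑ j, pmVec n (e η) j * s j := by
            refine Finset.sum_congr rfl fun j _ => ?_
            rw [key, mul_assoc, hsq, mul_one]
    · intro ε _; exact hinv ε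
    · intro η _; exact hinv η
    · intro ε _
      funext i
      rw [key, mul_assoc, hsq, mul_one]
  rw [step]
  funext i
  rw [Finset.sum_apply]
  have : ∑ η ∈ Finset.univ.filter (fun η : Fin n → Bool => 0 ≤ ∑ j, pmVec n η j),
      pmVec n η i * s i
      = (∑ η ∈ Finset.univ.filter (fun η : Fin n → Bool => 0 ≤ ∑ j, pmVec n η j),
          pmVec n η i) * s i := by
    rw [Finset.sum_mul]
  rw [this, core m hm' i]
  have h1 : n - 1 = 2*m := by omega
  have h2 : (n-1)/2 = m := by omega
  rw [Pi.smul_apply, h2, h1, smul_eq_mul]
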